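/- Let K be a number field and q(x) ∈ O_K[x] a non-constant polynomial with q(0) a unit times content 1, factoring over an extension as q(x) = ∏_{i=0}^d (c_i x − a_i) with all c_i ≠ 0, and let β ∈ O_K be nonzero. Then there exist a prime ideal 𝔓 of (a splitting field of q over) K and an algebraic integer γ avoiding any prescribed finite set of elements such that |q(γ)|_𝔓 < |β|_𝔓. -/

import Mathlib

open NumberField IsDedekindDomain Polynomial

theorem my_int_isJacobsonRing : IsJacobsonRing ℤ := by
  rw [isJacobsonRing_iff_prime_eq]
  intro P hP
  by_cases hbot : P = ⊥
  · subst hbot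
    refine le_antisymm ?_ Ideal.le_jacobson
    intro x hx
    have h1 := Ideal.mem_jacobson_bot.mp hx 1
    have h2 := Ideal.mem_jacobson_bot.mp hx (-1)
    rw [Int.isUnit_iff] at h1 h2
    simp only [Ideal.mem_bot]
    omega
  · haveI := hP
    have hmax := IsPrime.to_maximal_ideal hbot
    exact le_antisymm (sInf_le ⟨le_rfl, hmax⟩) Ideal.le_jacobson

/-- In the ring of integers of a number field, any nonzero element avoids some
maximal ideal. -/
theorem my_exists_maximal_not_mem {L : Type*} [Field L] [NumberField L]
    {N : 𝓞 L} (hN : N ≠ 0) : ∃ M : Ideal (𝓞 L), M.IsMaximal ∧ N ∉ M := by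
  haveI : IsJacobsonRing ℤ := my_int_isJacobsonRing
  haveI : IsJacobsonRing (𝓞 L) := isJacobsonRing_of_isIntegral (R := ℤ)
  have hjac : (⊥ : Ideal (𝓞 L)).jacobson = ⊥ := by
    rw [← Ideal.radical_eq_jacobson, Ideal.radical_bot_of_noZeroDivisors]
  have hNmem : N ∉ (⊥ : Ideal (𝓞 L)).jacobson := by
    rw [hjac]; simpa using hN
  rw [Ideal.jacobson, Ideal.mem_sInf] at hNmem
  push_neg at hNmem
  obtain ⟨M, ⟨-, hM⟩, hNM⟩ := hNmem
  exact ⟨M, hM, hNM⟩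

set_option maxHeartbeats 1000000 in
set_option synthInstance.maxHeartbeats 1000000 in
theorem denominator_small_value (K L : Type*) [Field K] [NumberField K]
    [Field L] [NumberField L] [Algebra K L]
    (q : Polynomial (𝓞 K)) (hq : 0 < q.natDegree) (hq0 : IsUnit (q.coeff 0))
    (c a : Fin q.natDegree → L) (hc : ∀ i, c i ≠ 0)
    (hfact : q.map (algebraMap (𝓞 K) L) =
      ∏ i, (Polynomial.C (c i) * Polynomial.X - Polynomial.C (a i)))
    (β : 𝓞 K) (hβ : β ≠ 0) (S : Finset (𝓞 L)) :
    ∃ 𝔓 : HeightOneSpectrum (𝓞 L), ∃ γ : 𝓞 L, γ ∉ S ∧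
      𝔓.valuation L (algebraMap (𝓞 L) L ((q.map (algebraMap (𝓞 K) (𝓞 L))).eval γ)) <
        𝔓.valuation L (algebraMap K L (algebraMap (𝓞 K) K β)) := by
  -- common denominator for all `c i`, `a i`
  obtain ⟨b, hb⟩ := IsLocalization.exist_integer_multiples (nonZeroDivisors (𝓞 L))
    (Finset.univ : Finset (Fin q.natDegree ⊕ Fin q.natDegree)) (Sum.elim c a)
  set s : 𝓞 L := (b : 𝓞 L) with hs_def
  have hs0 : s ≠ 0 := nonZeroDivisors.coe_ne_zero b
  choose C hC using fun i => hb (Sum.inl i) (Finset.mem_univ _)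
  choose A hA using fun i => hb (Sum.inr i) (Finset.mem_univ _)
  -- injectivity facts
  have hRL : Function.Injective (algebraMap (𝓞 L) L) := IsFractionRing.injective (𝓞 L) L
  have hKL : Function.Injective (algebraMap (𝓞 K) (𝓞 L)) := by
    intro x y h
    have h2 := congrArg (algebraMap (𝓞 L) L) h
    rw [← IsScalarTower.algebraMap_apply, ← IsScalarTower.algebraMap_apply] at h2
    exact (FaithfulSMul.algebraMap_injective (𝓞 K) L) h2
  set i0 : Fin q.natDegree := ⟨0, hq⟩
  set βR : 𝓞 L := algebraMap (𝓞 K) (𝓞 L) β with hβR_def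
  have hβR : βR ≠ 0 := fun h => hβ (hKL (by rwa [map_zero]))
  have hC0 : C i0 ≠ 0 := by
    intro h
    apply hc i0
    have h1 := hC i0
    rw [h, map_zero, Algebra.smul_def] at h1
    rcases mul_eq_zero.mp h1.symm with h' | h'
    · exact absurd (hRL (by rwa [map_zero])) hs0
    · exact h'
  -- choose a maximal ideal avoiding `s * C i0 * βR`
  have hN0 : s * C i0 * βR ≠ 0 := mul_ne_zero (mul_ne_zero hs0 hC0) hβR
  obtain ⟨M, hM, hNM⟩ := my_exists_maximal_not_mem hN0
  have hMbot : M ≠ ⊥ := Ring.ne_bot_of_isMaximal_of_not_isField hM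
    (NumberField.RingOfIntegers.not_isField L)
  have hsM : s ∉ M := fun h => hNM (M.mul_mem_right _ (M.mul_mem_right _ h))
  have hCM : C i0 ∉ M := fun h => hNM (M.mul_mem_right _ (M.mul_mem_left _ h))
  have hβM : βR ∉ M := fun h => hNM (M.mul_mem_left _ h)
  set 𝔓 : HeightOneSpectrum (𝓞 L) := ⟨M, hM.isPrime, hMbot⟩ with h𝔓
  -- choose γ ≡ (A i0)/(C i0) mod M, γ ∉ S
  haveI := hM
  letI : Field (𝓞 L ⧸ M) := Ideal.Quotient.field M
  obtain ⟨γ₀, hγ₀⟩ := Ideal.Quotient.mk_surjective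
    (Ideal.Quotient.mk M (A i0) * (Ideal.Quotient.mk M (C i0))⁻¹)
  obtain ⟨p, hpM, hp0⟩ := (Submodule.ne_bot_iff M).mp hMbot
  have hinf : Set.Infinite {x : 𝓞 L | Ideal.Quotient.mk M x = Ideal.Quotient.mk M γ₀} := by
    apply Set.infinite_of_injective_forall_mem (f := fun r : 𝓞 L => γ₀ + p * r)
    · intro x y h
      simpa [mul_right_inj' hp0] using (add_right_injective γ₀ h)
    · intro x
      simp only [Set.mem_setOf_eq, map_add, map_mul]
      rw [Ideal.Quotient.eq_zero_iff_mem.mpr hpM, zero_mul, add_zero]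
  obtain ⟨γ, hγmem, hγS⟩ := hinf.exists_notMem_finset S
  have hπC : Ideal.Quotient.mk M (C i0) ≠ 0 := by
    rwa [Ne, Ideal.Quotient.eq_zero_iff_mem]
  have hkey : C i0 * γ - A i0 ∈ M := by
    rw [← Ideal.Quotient.eq_zero_iff_mem, map_sub, map_mul, hγmem, hγ₀,
      mul_comm (Ideal.Quotient.mk M (C i0)), mul_assoc, inv_mul_cancel₀ hπC, mul_one, sub_self]
  refine ⟨𝔓, γ, hγS, ?_⟩
  -- valuation facts
  have hmem_iff : ∀ r : 𝓞 L, 𝔓.intValuation r < 1 ↔ r ∈ M := by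
    intro r
    rw [
      𝔓.intValuation_lt_one_iff_dvd, Ideal.dvd_span_singleton]
  have hle_one : ∀ r : 𝓞 L, 𝔓.intValuation r ≤ 1 := fun r => 𝔓.intValuation_le_one r
  have hvs : 𝔓.intValuation s = 1 :=
    le_antisymm (hle_one s) (not_lt.mp (fun h => hsM ((hmem_iff s).mp h)))
  have hvβ : 𝔓.intValuation βR = 1 :=
    le_antisymm (hle_one βR) (not_lt.mp (fun h => hβM ((hmem_iff βR).mp h)))
  -- rewrite the RHS
  have hRHS : 𝔓.valuation L (algebraMap K L (algebraMap (𝓞 K) K β)) = 1 := by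
    rw [← IsScalarTower.algebraMap_apply (𝓞 K) K L,
      IsScalarTower.algebraMap_apply (𝓞 K) (𝓞 L) L, 𝔓.valuation_of_algebraMap, ← hβR_def, hvβ]
  rw [hRHS]
  -- rewrite the LHS
  have hLHS : algebraMap (𝓞 L) L ((q.map (algebraMap (𝓞 K) (𝓞 L))).eval γ) =
      ∏ i, (c i * algebraMap (𝓞 L) L γ - a i) := by
    rw [← Polynomial.eval₂_at_apply, ← Polynomial.eval_map, Polynomial.map_map,
      ← IsScalarTower.algebraMap_eq, hfact]
    simp [Polynomial.eval_prod]
  rw [hLHS, map_prod]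
  -- each factor equals the integer valuation of `C i * γ - A i`
  have hfac : ∀ i, 𝔓.valuation L (c i * algebraMap (𝓞 L) L γ - a i) =
      𝔓.intValuation (C i * γ - A i) := by
    intro i
    have heq : algebraMap (𝓞 L) L s * (c i * algebraMap (𝓞 L) L γ - a i) =
        algebraMap (𝓞 L) L (C i * γ - A i) := by
      rw [map_sub, map_mul, hC i, hA i, Algebra.smul_def, Algebra.smul_def]
      simp only [Sum.elim_inl, Sum.elim_inr]
      ring
    have h2 := congrArg (𝔓.valuation L) heq
    rw [map_mul, 𝔓.valuation_of_algebraMap, 𝔓.valuation_of_algebraMap, hvs, one_mul] at h2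
    exact h2
  calc ∏ i, 𝔓.valuation L (c i * algebraMap (𝓞 L) L γ - a i)
      = ∏ i, 𝔓.intValuation (C i * γ - A i) := Finset.prod_congr rfl (fun i _ => hfac i)
    _ = 𝔓.intValuation (C i0 * γ - A i0) *
        ∏ i ∈ Finset.univ.erase i0, 𝔓.intValuation (C i * γ - A i) :=
        (Finset.mul_prod_erase _ _ (Finset.mem_univ i0)).symm
    _ ≤ 𝔓.intValuation (C i0 * γ - A i0) * 1 :=
        mul_le_mul_right (Finset.prod_le_one' (fun i _ => hle_one _)) _
    _ = 𝔓.intValuation (C i0 * γ - A i0) := mul_one _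
    _ < 1 := (hmem_iff _).mpr hkey
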